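/- arXiv:1605.04063 — 2 statements merged into one kernel-verified Lean document; each statement's English description precedes it below -/
import Mathlib

section
/- Let q be a prime power, m₁ | m, m₂ | m with gcd(m₁, m₂) = 1 and gcd(m₁, q-1) = 1, and define Ω(b) = ∑_{x ∈ F_{q^m}^*} ∑_{y,z ∈ F_q^*} χ₁(y b x^{(q^m-1)/(q^{m₁}-1)}) χ₂(z x^{(q^m-1)/(q^{m₂}-1)}) χ(z) for b ∈ F_{q^{m₁}}^*, where χ, χ₁, χ₂ are the canonical additive characters of F_q, F_{q^{m₁}}, F_{q^{m₂}}. Then Ω(b) = -(q^m - 1)(q - 1)/((q^{m₁} - 1)(q^{m₂} - 1)) for every b ∈ F_{q^{m₁}}^*. -/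
open Finset Polynomial
lemma aux_sum_units {E : Type*} [Field E] [Fintype E] [DecidableEq E]
    (χ : AddChar E ℂ) (hχ : χ ≠ 1) (c : E) (hc : c ≠ 0) :
    ∑ v : Eˣ, χ (c * (v : E)) = -1 := by
  have h0 : ∑ v : E, χ (c * v) = 0 := by
    rw [Fintype.sum_equiv (Equiv.mulLeft₀ c hc) (fun v => χ (c * v)) (fun v => χ v)
      (fun v => rfl)]
    exact AddChar.sum_eq_zero_iff_ne_zero.2 (by rwa [← AddChar.one_eq_zero])
  have e1 : (∑ v : Eˣ, χ (c * (v : E))) = ∑ v : {x : E // x ≠ 0}, χ (c * v) :=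
    Fintype.sum_equiv unitsEquivNeZero _ _ (fun v => rfl)
  have e2 : (∑ v : {x : E // x ≠ 0}, χ (c * v)) = ∑ v ∈ Finset.univ.erase (0 : E), χ (c * v) :=
    (Finset.sum_subtype (Finset.univ.erase (0:E)) (by simp) (fun v => χ (c * v))).symm
  have h2 : ∑ v ∈ Finset.univ.erase (0 : E), χ (c * v) + χ (c * 0) = ∑ v : E, χ (c * v) :=
    Finset.sum_erase_add _ _ (Finset.mem_univ _)
  rw [e1, e2]
  simp only [mul_zero, AddChar.map_zero_eq_one, h0] at h2
  linear_combination h2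
lemma aux_card_comp {G H : Type*} [Group G] [Group H] (φ : G →* H)
    (hφ : Function.Surjective φ) :
    Nat.card G = Nat.card (MonoidHom.ker φ) * Nat.card H := by
  rw [Subgroup.card_eq_card_quotient_mul_card_subgroup (MonoidHom.ker φ),
    Nat.card_congr (QuotientGroup.quotientKerEquivOfSurjective φ hφ).toEquiv, mul_comm]

lemma aux_sum_comp {G H : Type*} [Group G] [Group H] [Fintype G] [Fintype H]
    (φ : G →* H) (hφ : Function.Surjective φ) (f : H → ℂ) :
    ∑ g : G, f (φ g) = (Nat.card (MonoidHom.ker φ) : ℂ) * ∑ h : H, f h := by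
  classical
  have key : ∀ h : H, Fintype.card {g : G // φ g = h} = Nat.card (MonoidHom.ker φ) := by
    intro h
    obtain ⟨g₀, hg₀⟩ := hφ h
    have e : {g : G // φ g = h} ≃ MonoidHom.ker φ :=
      { toFun := fun g => ⟨g₀⁻¹ * g.1, by
          have := g.2
          simp [MonoidHom.mem_ker, map_mul, hg₀, this]⟩
        invFun := fun w => ⟨g₀ * w.1, by
          have := w.2
          rw [MonoidHom.mem_ker] at this
          simp [map_mul, hg₀, this]⟩
        left_inv := fun g => by simp
        right_inv := fun w => by simp }
    rw [Fintype.card_congr e, Nat.card_eq_fintype_card]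
  calc ∑ g : G, f (φ g) = ∑ h : H, ∑ g : {g : G // φ g = h}, f (φ g) :=
        (Fintype.sum_fiberwise φ (fun g => f (φ g))).symm
    _ = ∑ h : H, (Nat.card (MonoidHom.ker φ) : ℂ) * f h := by
        refine Finset.sum_congr rfl fun h _ => ?_
        rw [← key h]
        rw [Finset.sum_congr rfl (fun g _ => by rw [g.2] : ∀ g ∈ (univ : Finset {g : G // φ g = h}), f (φ g) = f h)]
        simp [Finset.card_univ]
    _ = _ := by rw [← Finset.mul_sum]
lemma aux_norm_formula (E L : Type*) [Field E] [Field L] [Fintype E] [Fintype L] [Algebra E L] :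
    ∃ c : ℕ, 0 < c ∧ c * (Fintype.card E - 1) = Fintype.card L - 1 ∧
      ∀ x : L, algebraMap E L (Algebra.norm E x) = x ^ c := by
  classical
  obtain ⟨p, hp⟩ := CharP.exists E
  haveI hpL : CharP L p := charP_of_injective_algebraMap (algebraMap E L).injective p
  obtain ⟨s, hpprime, hqE⟩ := FiniteField.card E p
  haveI : Fact p.Prime := ⟨hpprime⟩
  set qE := Fintype.card E with hqEdef
  set r := Module.finrank E L with hrdef
  have hr : 0 < r := Module.finrank_pos
  have hcardL : Fintype.card L = qE ^ r := by
    have := Module.card_fintype (Module.finBasis E L)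
    simpa using this
  have hqE2 : 2 ≤ qE := Fintype.one_lt_card
  have hqE0 : qE ≠ 0 := by omega
  have hfrob : ∀ a : E, (algebraMap E L a) ^ qE = algebraMap E L a := by
    intro a
    rw [← map_pow, FiniteField.pow_card]
  have hringhom : ∀ (x y : L), (x + y) ^ qE = x ^ qE + y ^ qE := by
    intro x y
    have h := (iterateFrobenius L p s).map_add x y
    simpa [iterateFrobenius_def, ← hqE] using h
  let σh : L →ₐ[E] L :=
    { toFun := fun x => x ^ qE
      map_one' := one_pow _
      map_mul' := fun x y => mul_pow x y qE
      map_zero' := zero_pow hqE0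
      map_add' := hringhom
      commutes' := hfrob }
  have hσhbij : Function.Bijective σh :=
    (Finite.injective_iff_bijective).1 σh.toRingHom.injective
  let σ : L ≃ₐ[E] L := AlgEquiv.ofBijective σh hσhbij
  have hσ : ∀ x : L, σ x = x ^ qE := fun x => rfl
  have hσpow : ∀ (i : ℕ) (x : L), (σ ^ i) x = x ^ qE ^ i := by
    intro i
    induction i with
    | zero => intro x; simp
    | succ i ih =>
      intro x
      rw [pow_succ, AlgEquiv.mul_apply, hσ, ih, ← pow_mul]
      congr 1
      ring
  have horder : orderOf σ = r := by
    have hσr : σ ^ r = 1 := by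
      ext x
      rw [hσpow, ← hcardL, FiniteField.pow_card, AlgEquiv.one_apply]
    have hdvd : orderOf σ ∣ r := orderOf_dvd_of_pow_eq_one hσr
    rcases lt_or_eq_of_le (Nat.le_of_dvd hr hdvd) with hlt | heq
    · exfalso
      set j := orderOf σ with hj
      have hj0 : 0 < j := (isOfFinOrder_of_finite σ).orderOf_pos
      have hall : ∀ x : L, x ^ qE ^ j = x := by
        intro x
        calc x ^ qE ^ j = (σ ^ j) x := (hσpow j x).symm
          _ = x := by rw [pow_orderOf_eq_one σ, AlgEquiv.one_apply]
      have h1 : (1:ℕ) < qE ^ j := one_lt_pow₀ hqE2 hj0.ne'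
      have hdeg : (X ^ qE ^ j - X : L[X]).natDegree = qE ^ j := by
        rw [Polynomial.natDegree_sub_eq_left_of_natDegree_lt (by simpa using h1),
          Polynomial.natDegree_X_pow]
      have hne : (X ^ qE ^ j - X : L[X]) ≠ 0 := fun h => by
        rw [h] at hdeg; simp at hdeg; omega
      have hsub : (Finset.univ : Finset L) ⊆ (X ^ qE ^ j - X : L[X]).roots.toFinset := by
        intro x _
        rw [Multiset.mem_toFinset, Polynomial.mem_roots hne]
        simp [Polynomial.IsRoot, hall x]
      have hcard_le : Fintype.card L ≤ qE ^ j := by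
        calc Fintype.card L = (Finset.univ : Finset L).card := Finset.card_univ.symm
          _ ≤ _ := Finset.card_le_card hsub
          _ ≤ Multiset.card (X ^ qE ^ j - X : L[X]).roots := Multiset.toFinset_card_le _
          _ ≤ (X ^ qE ^ j - X : L[X]).natDegree := Polynomial.card_roots' _
          _ = qE ^ j := hdeg
      rw [hcardL] at hcard_le
      exact absurd hcard_le (not_le.2 (pow_lt_pow_right₀ hqE2 hlt))
    · exact heq
  refine ⟨∑ i ∈ Finset.range r, qE ^ i, ?_, ?_, ?_⟩
  · exact Finset.sum_pos (fun i _ => pow_pos (by omega) i) ⟨0, Finset.mem_range.2 hr⟩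
  · have h1 : (1:ℕ) ≤ qE := by omega
    have h2 : (1:ℕ) ≤ qE ^ r := Nat.one_le_pow _ _ (by omega)
    rw [hcardL]
    zify [h1, h2]
    push_cast
    linear_combination geom_sum_mul (qE:ℤ) r
  · intro x
    rw [Algebra.norm_eq_prod_automorphisms]
    have hbij : Function.Bijective (fun i : Fin r => σ ^ (i : ℕ)) := by
      rw [Fintype.bijective_iff_injective_and_card]
      refine ⟨fun i j hij => Fin.ext (pow_injOn_Iio_orderOf (by rw [horder]; exact i.2)
        (by rw [horder]; exact j.2) hij), ?_⟩
      rw [Fintype.card_fin, ← Nat.card_eq_fintype_card, IsGalois.card_aut_eq_finrank]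
    rw [← Fintype.prod_bijective _ hbij _ (fun τ => τ x) (fun i => rfl)]
    have heq : ∀ i : Fin r, (σ ^ (i:ℕ)) x = x ^ qE ^ (i:ℕ) := fun i => hσpow _ _
    rw [Fintype.prod_congr _ _ heq, Fin.prod_univ_eq_prod_range (fun i => x ^ qE ^ i) r,
      Finset.prod_pow_eq_pow_sum]

lemma aux_norm_surj (E L : Type*) [Field E] [Field L] [Fintype E] [Fintype L] [Algebra E L] :
    Function.Surjective (Units.map (Algebra.norm E : L →* E)) := by
  classical
  obtain ⟨c, hc0, hcmul, hcform⟩ := aux_norm_formula E L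
  obtain ⟨g, hg⟩ := IsCyclic.exists_generator (α := Lˣ)
  have hordg : orderOf g = Fintype.card L - 1 := by
    rw [orderOf_eq_card_of_forall_mem_zpowers hg, Nat.card_eq_fintype_card, Fintype.card_units]
  set N : Lˣ →* Eˣ := Units.map (Algebra.norm E : L →* E) with hN
  set ι : Eˣ →* Lˣ := Units.map (algebraMap E L : E →* L) with hι
  have hι_inj : Function.Injective ι := Units.map_injective (algebraMap E L).injective
  have hιN : ∀ x : Lˣ, ι (N x) = x ^ c := by
    intro x
    ext
    push_cast [hN, hι]
    exact hcform (x : L)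
  have hcdvd : c ∣ Fintype.card L - 1 := ⟨_, hcmul.symm⟩
  have hordNg : orderOf (N g) = Fintype.card E - 1 := by
    have h1 : orderOf (ι (N g)) = orderOf (N g) := orderOf_injective ι hι_inj (N g)
    have h2 : orderOf (g ^ c) = orderOf g / Nat.gcd (orderOf g) c := orderOf_pow g
    have hgcd : Nat.gcd (orderOf g) c = c := Nat.gcd_eq_right (by rw [hordg]; exact hcdvd)
    rw [← h1, hιN, h2, hgcd, hordg]
    exact Nat.div_eq_of_eq_mul_left hc0 (by rw [← hcmul]; ring)
  intro u
  have htop : Subgroup.zpowers (N g) = ⊤ := by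
    apply Subgroup.eq_top_of_card_eq
    rw [Nat.card_zpowers, hordNg, Nat.card_eq_fintype_card, Fintype.card_units]
  have hzp : u ∈ Subgroup.zpowers (N g) := by rw [htop]; trivial
  obtain ⟨j, hj⟩ := hzp
  have hj' : N g ^ j = u := hj
  exact ⟨g ^ j, by rw [map_zpow, hj']⟩

lemma aux_ker_pow (E L : Type*) [Field E] [Field L] [Fintype E] [Fintype L] [Algebra E L]
    (x : Lˣ) (hx : Units.map (Algebra.norm E : L →* E) x = 1) :
    ∃ z : Lˣ, x = z ^ (Fintype.card E - 1) := by
  classical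
  obtain ⟨c, hc0, hcmul, hcform⟩ := aux_norm_formula E L
  obtain ⟨g, hg⟩ := IsCyclic.exists_generator (α := Lˣ)
  have hordg : orderOf g = Fintype.card L - 1 := by
    rw [orderOf_eq_card_of_forall_mem_zpowers hg, Nat.card_eq_fintype_card, Fintype.card_units]
  -- x = g ^ j for a natural j
  obtain ⟨j, hj0⟩ := (mem_powers_iff_mem_zpowers).2 (hg x)
  have hj : g ^ j = x := hj0
  -- x ^ c = 1
  have hxc : x ^ c = 1 := by
    ext
    push_cast
    have h1 : Algebra.norm E (x : L) = 1 := by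
      have := congrArg (fun u : Eˣ => (u : E)) hx
      simpa using this
    have := hcform (x : L)
    rw [h1, map_one] at this
    exact this.symm
  -- orderOf g ∣ j * c
  have hdvd : orderOf g ∣ j * c := by
    apply orderOf_dvd_of_pow_eq_one
    rw [pow_mul, hj, hxc]
  rw [hordg, ← hcmul] at hdvd
  -- so (card E - 1) ∣ j
  obtain ⟨i, hi⟩ := hdvd
  have hj' : j = (Fintype.card E - 1) * i := by
    have : c * ((Fintype.card E - 1) * i) = c * j := by rw [mul_comm c j, hi]; ring
    exact (Nat.eq_of_mul_eq_mul_left hc0 this).symm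
  exact ⟨g ^ i, by rw [← hj, hj', mul_comm, pow_mul]⟩

lemma aux_nums (q m₁ m₂ : ℕ) (hq2 : 2 ≤ q) (hm₁ : 0 < m₁) (hm₂ : 0 < m₂)
    (hgcd : Nat.gcd m₁ m₂ = 1) (hl : Nat.gcd m₁ (q-1) = 1) :
    (∑ i ∈ Finset.range m₁, q ^ i) * (q - 1) = q ^ m₁ - 1 ∧
    Nat.gcd (∑ i ∈ Finset.range m₁, q ^ i) (q - 1) = 1 ∧
    Nat.gcd (q ^ m₁ - 1) (q ^ m₂ - 1) = q - 1 := by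
  have hd0 : 0 < q - 1 := by omega
  have hqm₁ : 2 ≤ q ^ m₁ := by
    calc 2 = 2 ^ 1 := rfl
    _ ≤ q ^ m₁ := Nat.pow_le_pow_left hq2 1 |>.trans (Nat.pow_le_pow_right (by omega) hm₁)
  have hqm₂ : 2 ≤ q ^ m₂ := by
    calc 2 = 2 ^ 1 := rfl
    _ ≤ q ^ m₂ := Nat.pow_le_pow_left hq2 1 |>.trans (Nat.pow_le_pow_right (by omega) hm₂)
  haveI : NeZero (q - 1) := ⟨by omega⟩
  have hqzmod : ((q : ZMod (q-1))) = 1 := by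
    have hq' : q = (q - 1) + 1 := by omega
    rw [hq']
    push_cast [ZMod.natCast_self]
    ring
  constructor
  · -- geometric sum
    have key : (((∑ i ∈ Finset.range m₁, q ^ i) * (q - 1) : ℕ) : ℤ) = ((q ^ m₁ - 1 : ℕ) : ℤ) := by
      push_cast [Nat.cast_sub (by omega : 1 ≤ q), Nat.cast_sub (by omega : 1 ≤ q ^ m₁)]
      linear_combination geom_sum_mul (q:ℤ) m₁
    exact_mod_cast key
  constructor
  · -- coprimality
    have hkZ : ((∑ i ∈ Finset.range m₁, q ^ i : ℕ) : ZMod (q-1)) = (m₁ : ZMod (q-1)) := by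
      push_cast
      rw [Finset.sum_congr rfl (fun i _ => by rw [hqzmod, one_pow])]
      simp
    have hu : IsUnit ((∑ i ∈ Finset.range m₁, q ^ i : ℕ) : ZMod (q-1)) := by
      rw [hkZ]
      exact (ZMod.isUnit_iff_coprime m₁ (q-1)).2 hl
    exact (ZMod.isUnit_iff_coprime _ _).1 hu
  · -- gcd of q^a - 1
    have hddvd₁ : q - 1 ∣ q ^ m₁ - 1 := by simpa using Nat.sub_dvd_pow_sub_pow q 1 m₁
    have hddvd₂ : q - 1 ∣ q ^ m₂ - 1 := by simpa using Nat.sub_dvd_pow_sub_pow q 1 m₂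
    set g := Nat.gcd (q ^ m₁ - 1) (q ^ m₂ - 1) with hg
    have hg0 : 0 < g := Nat.gcd_pos_of_pos_left _ (by omega)
    haveI : NeZero g := ⟨hg0.ne'⟩
    have hpow : ∀ mm : ℕ, 0 < mm → g ∣ q ^ mm - 1 → ((q : ZMod g)) ^ mm = 1 := by
      intro mm hmm hdvd
      have h1 : ((q ^ mm - 1 : ℕ) : ZMod g) = 0 := (ZMod.natCast_eq_zero_iff _ _).2 hdvd
      have h2 : ((q ^ mm - 1 : ℕ) : ZMod g) = (q : ZMod g) ^ mm - 1 := by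
        push_cast [Nat.cast_sub (Nat.one_le_pow _ _ (by omega) : 1 ≤ q ^ mm)]
        ring
    -- conclude
      rw [h2] at h1
      linear_combination h1
    have h₁ := hpow m₁ hm₁ (Nat.gcd_dvd_left _ _)
    have h₂ := hpow m₂ hm₂ (Nat.gcd_dvd_right _ _)
    have hu : IsUnit ((q : ZMod g)) := IsUnit.of_pow_eq_one h₁ hm₁.ne'
    obtain ⟨w, hw⟩ := hu
    have hw₁ : w ^ m₁ = 1 := Units.ext (by rw [Units.val_pow_eq_pow_val, hw]; exact h₁)
    have hw₂ : w ^ m₂ = 1 := Units.ext (by rw [Units.val_pow_eq_pow_val, hw]; exact h₂)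
    have hw0 : w = 1 := by
      have := pow_gcd_eq_one.2 ⟨hw₁, hw₂⟩
      rwa [hgcd, pow_one] at this
    have hq1 : (q : ZMod g) = 1 := by rw [← hw, hw0, Units.val_one]
    have hgd : g ∣ q - 1 := by
      have h3 : ((q - 1 : ℕ) : ZMod g) = 0 := by
        push_cast [Nat.cast_sub (by omega : 1 ≤ q)]
        rw [hq1]; ring
      exact (ZMod.natCast_eq_zero_iff _ _).1 h3
    exact Nat.dvd_antisymm hgd (Nat.dvd_gcd hddvd₁ hddvd₂)


/-- For `m₁ ∣ m`, `m₂ ∣ m` with `gcd(m₁, m₂) = 1` and `gcd(m₁, q-1) = 1`, and `b ∈ F_{q^{m₁}}ˣ`,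
`Ω(b) = ∑_{x ∈ F_{q^m}ˣ} ∑_{y,z ∈ F_qˣ} χ₁(y b N_{q^m/q^{m₁}}(x)) χ₂(z N_{q^m/q^{m₂}}(x)) χ(z)`
equals `-(q^m - 1)(q-1) / ((q^{m₁}-1)(q^{m₂}-1))`. -/
theorem stmt_15 (q m m₁ m₂ : ℕ) (hq : IsPrimePow q)
    (hd₁ : m₁ ∣ m) (hd₂ : m₂ ∣ m) (hgcd : Nat.gcd m₁ m₂ = 1)
    (hl : Nat.gcd m₁ (q - 1) = 1) (hm : 0 < m)
    (K F₁ F₂ F : Type) [Field K] [Field F₁] [Field F₂] [Field F]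
    [Fintype K] [Fintype F₁] [Fintype F₂] [Fintype F]
    [DecidableEq K] [DecidableEq F₁] [DecidableEq F₂] [DecidableEq F]
    [Algebra K F₁] [Algebra K F₂] [Algebra F₁ F] [Algebra F₂ F]
    (hK : Fintype.card K = q) (hF₁ : Fintype.card F₁ = q ^ m₁)
    (hF₂ : Fintype.card F₂ = q ^ m₂) (hF : Fintype.card F = q ^ m)
    (χ : AddChar K ℂ) (hχ : χ ≠ 1)
    (χ₁ : AddChar F₁ ℂ) (hχ₁ : χ₁ ≠ 1) (χ₂ : AddChar F₂ ℂ) (hχ₂ : χ₂ ≠ 1)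
    (b : F₁ˣ) :
    ∑ x : Fˣ, ∑ y : Kˣ, ∑ z : Kˣ,
        χ₁ (algebraMap K F₁ (y : K) * (b : F₁) * Algebra.norm F₁ (x : F)) *
          χ₂ (algebraMap K F₂ (z : K) * Algebra.norm F₂ (x : F)) * χ (z : K) =
      -(((q : ℂ) ^ m - 1) * ((q : ℂ) - 1)) / (((q : ℂ) ^ m₁ - 1) * ((q : ℂ) ^ m₂ - 1)) := by
  classical
  -- basic numerics
  have hq2 : 2 ≤ q := hq.two_le
  have hm₁ : 0 < m₁ := by
    rcases Nat.eq_zero_or_pos m₁ with h | h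
    · exfalso; rw [h] at hd₁; rw [zero_dvd_iff] at hd₁; omega
    · exact h
  have hm₂ : 0 < m₂ := by
    rcases Nat.eq_zero_or_pos m₂ with h | h
    · exfalso; rw [h] at hd₂; rw [zero_dvd_iff] at hd₂; omega
    · exact h
  obtain ⟨hknum, hkcop, hgcdnum⟩ := aux_nums q m₁ m₂ hq2 hm₁ hm₂ hgcd hl
  set d := q - 1 with hd
  set n₁ := q ^ m₁ - 1 with hn₁def
  set n₂ := q ^ m₂ - 1 with hn₂def
  set n := q ^ m - 1 with hndef
  set k := ∑ i ∈ Finset.range m₁, q ^ i with hkdef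
  have hqm₁ : 2 ≤ q ^ m₁ := by
    calc 2 = 2 ^ 1 := rfl
    _ ≤ q ^ m₁ := Nat.pow_le_pow_left hq2 1 |>.trans (Nat.pow_le_pow_right (by omega) hm₁)
  have hqm₂ : 2 ≤ q ^ m₂ := by
    calc 2 = 2 ^ 1 := rfl
    _ ≤ q ^ m₂ := Nat.pow_le_pow_left hq2 1 |>.trans (Nat.pow_le_pow_right (by omega) hm₂)
  have hqm : 2 ≤ q ^ m := by
    calc 2 = 2 ^ 1 := rfl
    _ ≤ q ^ m := Nat.pow_le_pow_left hq2 1 |>.trans (Nat.pow_le_pow_right (by omega) hm)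
  have hd0 : 0 < d := by omega
  have hn₁0 : 0 < n₁ := by omega
  have hn₂0 : 0 < n₂ := by omega
  have hn0 : 0 < n := by omega
  -- card of unit groups
  have hcardK : Fintype.card Kˣ = d := by rw [Fintype.card_units, hK]
  have hcardF₁ : Fintype.card F₁ˣ = n₁ := by rw [Fintype.card_units, hF₁]
  have hcardF₂ : Fintype.card F₂ˣ = n₂ := by rw [Fintype.card_units, hF₂]
  have hcardF : Fintype.card Fˣ = n := by rw [Fintype.card_units, hF]
  -- the norm maps on units
  set N₁ : Fˣ →* F₁ˣ := Units.map (Algebra.norm F₁ : F →* F₁) with hN₁def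
  set N₂ : Fˣ →* F₂ˣ := Units.map (Algebra.norm F₂ : F →* F₂) with hN₂def
  have hN₁surj : Function.Surjective N₁ := aux_norm_surj F₁ F
  have hN₂surj : Function.Surjective N₂ := aux_norm_surj F₂ F
  set ι : Kˣ →* F₁ˣ := Units.map (algebraMap K F₁ : K →* F₁) with hιdef
  have hι_inj : Function.Injective ι := Units.map_injective (algebraMap K F₁).injective
  -- the functions A and B
  set A : F₁ˣ → ℂ := fun u => ∑ y : Kˣ, χ₁ (algebraMap K F₁ (y : K) * (b : F₁) * (u : F₁))
    with hAdef
  set B : F₂ˣ → ℂ := fun v => ∑ z : Kˣ, χ₂ (algebraMap K F₂ (z : K) * (v : F₂)) * χ (z : K)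
    with hBdef
  -- the subgroup T
  set ν : ↥(MonoidHom.ker N₂) →* F₁ˣ := N₁.comp (MonoidHom.ker N₂).subtype with hνdef
  set T : Subgroup F₁ˣ := MonoidHom.range ν with hTdef
  letI : Fintype ↥(MonoidHom.ker N₂) := Fintype.ofFinite _
  letI : Fintype ↥T := Fintype.ofFinite _
  -- elements of T are k-th roots of unity
  have hTpow : ∀ s : F₁ˣ, s ∈ T → s ^ k = 1 := by
    intro s hs
    obtain ⟨w, hw⟩ := hs
    obtain ⟨z, hz⟩ := aux_ker_pow F₂ F (w : Fˣ) (by exact w.2)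
    rw [hF₂] at hz
    have hsz : s = (N₁ z) ^ n₂ := by
      rw [← hw]
      show N₁ (w : Fˣ) = N₁ z ^ n₂
      rw [hz, map_pow]
    obtain ⟨e₂, he₂⟩ : d ∣ n₂ := by
      have := Nat.sub_dvd_pow_sub_pow q 1 m₂; simpa using this
    have hn₂k : n₂ * k = n₁ * e₂ := by rw [he₂, ← hknum]; ring
    rw [hsz, ← pow_mul, hn₂k, pow_mul, ← hcardF₁, pow_card_eq_one, one_pow]
  -- (F₁ˣ)^(n₂) ⊆ T
  have hpowT : ∀ w : F₁ˣ, w ^ n₂ ∈ T := by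
    intro w
    obtain ⟨x, hx⟩ := hN₁surj w
    have hker : x ^ n₂ ∈ MonoidHom.ker N₂ := by
      rw [MonoidHom.mem_ker, map_pow, ← hcardF₂, pow_card_eq_one]
    exact ⟨⟨x ^ n₂, hker⟩, by show N₁ (x ^ n₂) = w ^ n₂; rw [map_pow, hx]⟩
  -- d-th roots of unity are in the image of ι
  have hdrootι : ∀ s : F₁ˣ, s ^ d = 1 → ∃ y : Kˣ, ι y = s := by
    intro s hs
    have himg : Finset.image (fun y : Kˣ => ι y) Finset.univ ⊆ Finset.univ.filter (fun a : F₁ˣ => a ^ d = 1) := by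
      intro a ha
      obtain ⟨y, _, rfl⟩ := Finset.mem_image.1 ha
      simp only [Finset.mem_filter, Finset.mem_univ, true_and]
      rw [← map_pow, ← hcardK, pow_card_eq_one, map_one]
    have hcard₁ : (Finset.image (fun y : Kˣ => ι y) Finset.univ).card = d := by
      rw [Finset.card_image_of_injective _ hι_inj, Finset.card_univ, hcardK]
    have hcard₂ : (Finset.univ.filter (fun a : F₁ˣ => a ^ d = 1)).card ≤ d :=
      IsCyclic.card_pow_eq_one_le hd0
    have heq := Finset.eq_of_subset_of_card_le himg (by omega)
    have : s ∈ Finset.univ.filter (fun a : F₁ˣ => a ^ d = 1) := by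
      simp only [Finset.mem_filter, Finset.mem_univ, true_and]; exact hs
    rw [← heq] at this
    obtain ⟨y, _, hy⟩ := Finset.mem_image.1 this
    exact ⟨y, hy⟩
  -- the multiplication map ψ : Kˣ × T → F₁ˣ is bijective
  set ψ : Kˣ × ↥T → F₁ˣ := fun p => ι p.1 * (p.2 : F₁ˣ) with hψdef
  have hψbij : Function.Bijective ψ := by
    constructor
    · rintro ⟨y, t⟩ ⟨y', t'⟩ h
      simp only [hψdef] at h
      have hs : ι (y / y') = (t' : F₁ˣ) / (t : F₁ˣ) := by
        rw [_root_.map_div]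
        rw [div_eq_div_iff_mul_eq_mul]
        rw [h]
        exact mul_comm _ _
      have hsd : (ι (y / y')) ^ d = 1 := by
        rw [← map_pow, ← hcardK, pow_card_eq_one, map_one]
      have hsT : ι (y / y') ∈ T := by
        rw [hs]
        exact T.div_mem t'.2 t.2
      have hsk : (ι (y / y')) ^ k = 1 := hTpow _ hsT
      have hs1 : ι (y / y') = 1 := by
        have := (pow_gcd_eq_one (a := ι (y / y'))).2 ⟨hsk, hsd⟩
        rwa [hkcop, pow_one] at this
      have hy : y = y' := by
        have : y / y' = 1 := hι_inj (by rw [hs1, map_one])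
        rwa [div_eq_one] at this
      have ht : t = t' := by
        have h2 : (t' : F₁ˣ) / (t : F₁ˣ) = 1 := by rw [← hs, hs1]
        rw [div_eq_one] at h2
        exact Subtype.ext h2.symm
      rw [hy, ht]
    · intro u
      -- u^k is in the image of ι
      obtain ⟨y₀, hy₀⟩ : ∃ y : Kˣ, ι y = u ^ k := by
        apply hdrootι
        rw [← pow_mul, hknum, ← hcardF₁, pow_card_eq_one]
      -- u^d is in T
      have hudT : u ^ d ∈ T := by
        have hgcd_eq : Nat.gcd n₁ n₂ = d := hgcdnum
        have hbez := Nat.gcd_eq_gcd_ab n₁ n₂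
        rw [hgcd_eq] at hbez
        have hu_n₁ : u ^ (n₁ : ℕ) = 1 := by rw [← hcardF₁]; exact pow_card_eq_one
        have hzpow : (u : F₁ˣ) ^ (d : ℤ) = (u ^ (Nat.gcdB n₁ n₂)) ^ (n₂ : ℤ) := by
          rw [hbez, zpow_add, zpow_mul, zpow_mul, zpow_natCast u n₁, hu_n₁, one_zpow, one_mul,
            ← zpow_mul, mul_comm ((n₂ : ℤ)) _, zpow_mul]
        have heq2 : u ^ d = (u ^ (Nat.gcdB n₁ n₂)) ^ (n₂ : ℕ) := by
          have h5 := hzpow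
          rwa [zpow_natCast, zpow_natCast] at h5
        rw [heq2]
        exact hpowT _
      -- Bezout for k and d
      have hbez2 := Nat.gcd_eq_gcd_ab k d
      rw [hkcop] at hbez2
      refine ⟨(y₀ ^ (Nat.gcdA k d), (⟨u ^ d, hudT⟩ : ↥T) ^ (Nat.gcdB k d)), ?_⟩
      show ι (y₀ ^ (Nat.gcdA k d)) * ((⟨u ^ d, hudT⟩ : ↥T) ^ (Nat.gcdB k d) : ↥T).1 = u
      have hcoe : ((⟨u ^ d, hudT⟩ : ↥T) ^ (Nat.gcdB k d) : ↥T).1 = (u ^ d) ^ (Nat.gcdB k d) := by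
        push_cast
        rfl
      rw [hcoe, map_zpow, hy₀]
      rw [← zpow_natCast u k, ← zpow_natCast u d, ← zpow_mul, ← zpow_mul]
      rw [← zpow_add]
      rw [show (↑k * Nat.gcdA k d + ↑d * Nat.gcdB k d : ℤ) = 1 from hbez2.symm, zpow_one]
  -- L1 : coset sums of A over T are all -1
  have hL1 : ∀ u₀ : F₁ˣ, ∑ t : ↥T, A (u₀ * (t : F₁ˣ)) = -1 := by
    intro u₀
    have hc : ((b * u₀ : F₁ˣ) : F₁) ≠ 0 := Units.ne_zero _
    have hstep : ∀ t : ↥T, A (u₀ * (t : F₁ˣ)) =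
        ∑ y : Kˣ, χ₁ (((b * u₀ : F₁ˣ) : F₁) * ((ψ (y, t) : F₁ˣ) : F₁)) := by
      intro t
      refine Finset.sum_congr rfl fun y _ => ?_
      congr 1
      have hcoeι : ((ι y : F₁ˣ) : F₁) = algebraMap K F₁ (y : K) := rfl
      push_cast [hψdef]
      rw [hcoeι]
      ring
    rw [Finset.sum_congr rfl (fun t _ => hstep t)]
    rw [Finset.sum_comm]
    have hsplit := Fintype.sum_prod_type
      (f := fun p : Kˣ × ↥T => χ₁ (((b * u₀ : F₁ˣ) : F₁) * ((ψ p : F₁ˣ) : F₁)))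
    rw [← hsplit]
    rw [Fintype.sum_bijective ψ hψbij _
      (fun w : F₁ˣ => χ₁ (((b * u₀ : F₁ˣ) : F₁) * (w : F₁))) (fun p => rfl)]
    exact aux_sum_units χ₁ hχ₁ _ hc
  -- sum of B over all of F₂ˣ is 1
  have hBsum : ∑ v : F₂ˣ, B v = 1 := by
    have hKsum : ∑ z : Kˣ, χ (z : K) = -1 := by
      have := aux_sum_units χ hχ 1 one_ne_zero
      simpa using this
    simp only [hBdef]
    rw [Finset.sum_comm]
    have hinner : ∀ z : Kˣ, ∑ v : F₂ˣ, χ₂ (algebraMap K F₂ (z : K) * (v : F₂)) * χ (z : K)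
        = - χ (z : K) := by
      intro z
      rw [← Finset.sum_mul]
      have hz : algebraMap K F₂ (z : K) ≠ 0 := by
        intro hzero
        exact Units.ne_zero z ((algebraMap K F₂).injective (by simpa using hzero))
      rw [aux_sum_units χ₂ hχ₂ _ hz]
      ring
    rw [Finset.sum_congr rfl (fun z _ => hinner z)]
    rw [Finset.sum_neg_distrib, hKsum]
    norm_num
  -- rewrite the statement in terms of A and B
  have hstep0 : (∑ x : Fˣ, ∑ y : Kˣ, ∑ z : Kˣ,
        χ₁ (algebraMap K F₁ (y : K) * (b : F₁) * Algebra.norm F₁ (x : F)) *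
          χ₂ (algebraMap K F₂ (z : K) * Algebra.norm F₂ (x : F)) * χ (z : K))
      = ∑ x : Fˣ, A (N₁ x) * B (N₂ x) := by
    refine Finset.sum_congr rfl fun x _ => ?_
    have hcoe₁ : Algebra.norm F₁ (x : F) = ((N₁ x : F₁ˣ) : F₁) := rfl
    have hcoe₂ : Algebra.norm F₂ (x : F) = ((N₂ x : F₂ˣ) : F₂) := rfl
    rw [hcoe₁, hcoe₂, hAdef, hBdef]
    rw [Finset.sum_mul_sum]
    refine Finset.sum_congr rfl fun y _ => Finset.sum_congr rfl fun z _ => ?_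
    ring
  rw [hstep0]
  -- the range-restricted homomorphism onto T
  set φ' : ↥(MonoidHom.ker N₂) →* ↥T := ν.rangeRestrict with hφ'def
  have hφ'surj : Function.Surjective φ' := ν.rangeRestrict_surjective
  set κ := Nat.card ↥(MonoidHom.ker N₂) with hκdef
  set τ := Nat.card ↥(MonoidHom.ker φ') with hτdef
  set t₀ := Nat.card ↥T with ht₀def
  -- shifting invariance
  have hshift : ∀ w : ↥(MonoidHom.ker N₂),
      (∑ x : Fˣ, A (N₁ x) * B (N₂ x)) = ∑ x : Fˣ, A (N₁ x * ν w) * B (N₂ x) := by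
    intro w
    have h := Equiv.sum_comp (Equiv.mulRight ((w : Fˣ))) (fun x : Fˣ => A (N₁ x) * B (N₂ x))
    rw [← h]
    refine Finset.sum_congr rfl fun x _ => ?_
    simp only [Equiv.coe_mulRight]
    rw [map_mul, map_mul]
    have hw1 : N₂ ((w : Fˣ)) = 1 := w.2
    rw [hw1, mul_one]
    rfl
  -- average over the kernel
  have hκΩ : (κ : ℂ) * (∑ x : Fˣ, A (N₁ x) * B (N₂ x))
      = ∑ w : ↥(MonoidHom.ker N₂), ∑ x : Fˣ, A (N₁ x * ν w) * B (N₂ x) := by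
    rw [Finset.sum_congr rfl (fun w _ => (hshift w).symm), Finset.sum_const, Finset.card_univ,
      nsmul_eq_mul, hκdef, Nat.card_eq_fintype_card]
  have hinner : ∀ x : Fˣ, ∑ w : ↥(MonoidHom.ker N₂), A (N₁ x * ν w) = -(τ : ℂ) := by
    intro x
    have h1 : ∀ w : ↥(MonoidHom.ker N₂), A (N₁ x * ν w)
        = (fun t : ↥T => A (N₁ x * (t : F₁ˣ))) (φ' w) := fun w => rfl
    rw [Finset.sum_congr rfl (fun w _ => h1 w)]
    rw [aux_sum_comp φ' hφ'surj (fun t : ↥T => A (N₁ x * (t : F₁ˣ)))]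
    rw [hL1 (N₁ x)]
    simp [hτdef]
  have hκΩ2 : (κ : ℂ) * (∑ x : Fˣ, A (N₁ x) * B (N₂ x)) = -(τ : ℂ) * ((κ : ℂ) * 1) := by
    rw [hκΩ, Finset.sum_comm]
    have h2 : ∀ x : Fˣ, ∑ w : ↥(MonoidHom.ker N₂), A (N₁ x * ν w) * B (N₂ x)
        = -(τ : ℂ) * B (N₂ x) := by
      intro x
      rw [← Finset.sum_mul, hinner x]
    rw [Finset.sum_congr rfl (fun x _ => h2 x)]
    rw [← Finset.mul_sum]
    congr 1
    have h3 := aux_sum_comp N₂ hN₂surj B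
    rw [h3, hBsum, hκdef]
  have hκ0 : (κ : ℂ) ≠ 0 := by
    rw [hκdef]
    exact_mod_cast Nat.cast_ne_zero.2 Nat.card_pos.ne'
  have hΩval : (∑ x : Fˣ, A (N₁ x) * B (N₂ x)) = -(τ : ℂ) := by
    have := hκΩ2
    rw [mul_one] at this
    rw [mul_comm (-(τ:ℂ)) _] at this
    exact mul_left_cancel₀ hκ0 this
  rw [hΩval]
  -- numerics
  have e1 : n = κ * n₂ := by
    have := aux_card_comp N₂ hN₂surj
    rwa [Nat.card_eq_fintype_card, Nat.card_eq_fintype_card (α := F₂ˣ), hcardF, hcardF₂] at this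
  have e3 : κ = τ * t₀ := aux_card_comp φ' hφ'surj
  have e2 : d * t₀ = n₁ := by
    have hcards := Fintype.card_of_bijective hψbij
    rw [Fintype.card_prod, hcardK, hcardF₁] at hcards
    rw [ht₀def, Nat.card_eq_fintype_card]
    exact hcards
  have key : τ * (n₁ * n₂) = n * d := by
    calc τ * (n₁ * n₂) = τ * ((d * t₀) * n₂) := by rw [e2]
    _ = d * ((τ * t₀) * n₂) := by ring
    _ = d * (κ * n₂) := by rw [e3]
    _ = d * n := by rw [← e1]
    _ = n * d := mul_comm _ _
  -- cast to ℂ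
  have c₁ : ((n₁ : ℕ) : ℂ) = (q : ℂ) ^ m₁ - 1 := by
    rw [hn₁def]
    push_cast [Nat.cast_sub (by omega : 1 ≤ q ^ m₁)]
    ring
  have c₂ : ((n₂ : ℕ) : ℂ) = (q : ℂ) ^ m₂ - 1 := by
    rw [hn₂def]
    push_cast [Nat.cast_sub (by omega : 1 ≤ q ^ m₂)]
    ring
  have cn : ((n : ℕ) : ℂ) = (q : ℂ) ^ m - 1 := by
    rw [hndef]
    push_cast [Nat.cast_sub (by omega : 1 ≤ q ^ m)]
    ring
  have cd : ((d : ℕ) : ℂ) = (q : ℂ) - 1 := by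
    rw [hd]
    push_cast [Nat.cast_sub (by omega : 1 ≤ q)]
    ring
  have hden : ((q : ℂ) ^ m₁ - 1) * ((q : ℂ) ^ m₂ - 1) ≠ 0 := by
    rw [← c₁, ← c₂]
    exact mul_ne_zero (Nat.cast_ne_zero.2 hn₁0.ne') (Nat.cast_ne_zero.2 hn₂0.ne')
  rw [eq_div_iff hden]
  have keyC : (τ : ℂ) * (((n₁ : ℕ) : ℂ) * ((n₂ : ℕ) : ℂ)) = ((n : ℕ) : ℂ) * ((d : ℕ) : ℂ) := by
    exact_mod_cast congrArg (fun x : ℕ => (x : ℂ)) key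
  rw [c₁, c₂, cn, cd] at keyC
  linear_combination -keyC
end

section
/- Let q be a prime power and m, k positive integers. If an [n, k, d] linear code over F_q satisfies the Griesmer bound with equality in the sense that n = ∑_{i=0}^{k-1} ⌈d/qⁱ⌉, and the code has a single nonzero weight w = d, then with n = (q^m - 1)/(q^{m₂}-1) · (q^{m₂-1} - 1), k = m₁, and d = q^{m₁-1}(q-1)(q^m-1)(q^{m₂-1}-1)/((q^{m₁}-1)(q^{m₂}-1)), where m₁ | m, m₂ | m, gcd(m₁,m₂) = 1, m₂ > 1, the Griesmer bound n ≥ ∑_{i=0}^{k-1} ⌈d/qⁱ⌉ holds with equality. -/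
theorem aux_dvd (q m m₁ m₂ : ℕ) (hq2 : 2 ≤ q)
    (hd₁ : m₁ ∣ m) (hd₂ : m₂ ∣ m) (hgcd : Nat.gcd m₁ m₂ = 1) (hm₂ : 1 < m₂) (hm₁ : 0 < m₁) :
    (q^m₁ - 1) * (q^m₂ - 1) ∣ (q - 1) * (q^m - 1) := by
  have hpow : ∀ a b : ℕ, a ∣ b → q^a - 1 ∣ q^b - 1 := by
    rintro a b ⟨c, rfl⟩
    simpa [pow_mul, one_pow] using Nat.sub_dvd_pow_sub_pow (q^a) 1 c
  -- gcd divides q - 1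
  obtain ⟨x, -, hx⟩ := Nat.exists_mul_mod_eq_one_of_coprime hgcd hm₂
  set g := Nat.gcd (q^m₁ - 1) (q^m₂ - 1) with hg
  have hdm := Nat.div_add_mod (m₁ * x) m₂
  have hy : m₁ * x = m₂ * (m₁ * x / m₂) + 1 := by omega
  set y := m₁ * x / m₂
  have h1 : g ∣ q^(m₁*x) - 1 := (Nat.gcd_dvd_left _ _).trans (hpow _ _ ⟨x, rfl⟩)
  have h2 : g ∣ q^(m₂*y) - 1 := (Nat.gcd_dvd_right _ _).trans (hpow _ _ ⟨y, rfl⟩)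
  have hq3 : q^(m₁*x) - q = q * (q^(m₂*y) - 1) := by
    rw [hy, pow_succ, Nat.mul_sub, mul_one, mul_comm]
  have h3 : g ∣ q^(m₁*x) - q := hq3 ▸ h2.mul_left q
  have hle : q ≤ q^(m₁*x) := Nat.le_self_pow (by omega) q
  have hgq : g ∣ q - 1 := by
    have := Nat.dvd_sub h1 h3
    have heq : (q^(m₁*x) - 1) - (q^(m₁*x) - q) = q - 1 := by omega
    rwa [heq] at this
  -- lcm divides q^m - 1
  have hmm : m₁ * m₂ ∣ m := Nat.Coprime.mul_dvd_of_dvd_of_dvd hgcd hd₁ hd₂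
  have hl : Nat.lcm (q^m₁ - 1) (q^m₂ - 1) ∣ q^m - 1 :=
    Nat.lcm_dvd (hpow _ _ hd₁) (hpow _ _ hd₂)
  calc (q^m₁ - 1) * (q^m₂ - 1) = g * Nat.lcm (q^m₁ - 1) (q^m₂ - 1) := (Nat.gcd_mul_lcm _ _).symm
    _ ∣ (q - 1) * (q^m - 1) := mul_dvd_mul hgq hl

/-- The one-weight code of Section 4.1 (case `gcd(m₁,m₂) = 1`, `m₂ > 1`) meets the Griesmer
bound with equality: with `n = (q^m-1)/(q^{m₂}-1)·(q^{m₂-1}-1)`, `k = m₁`, and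
`d = q^{m₁-1}(q-1)(q^m-1)(q^{m₂-1}-1)/((q^{m₁}-1)(q^{m₂}-1))`, one has
`∑_{i=0}^{m₁-1} ⌈d/qⁱ⌉ = n`. -/
theorem stmt_18 (q m m₁ m₂ : ℕ) (hq : IsPrimePow q)
    (hd₁ : m₁ ∣ m) (hd₂ : m₂ ∣ m) (hgcd : Nat.gcd m₁ m₂ = 1) (hm₂ : 1 < m₂) (hm₁ : 0 < m₁)
    (n d : ℚ)
    (hn : n = ((q : ℚ) ^ m - 1) / ((q : ℚ) ^ m₂ - 1) * ((q : ℚ) ^ (m₂ - 1) - 1))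
    (hd : d = (q : ℚ) ^ (m₁ - 1) * ((q : ℚ) - 1) * ((q : ℚ) ^ m - 1) *
        ((q : ℚ) ^ (m₂ - 1) - 1) / (((q : ℚ) ^ m₁ - 1) * ((q : ℚ) ^ m₂ - 1))) :
    (∑ i ∈ Finset.range m₁, (⌈d / (q : ℚ) ^ i⌉ : ℚ)) = n := by
  have hq2 : 2 ≤ q := hq.two_le
  obtain ⟨N, hN⟩ := aux_dvd q m m₁ m₂ hq2 hd₁ hd₂ hgcd hm₂ hm₁
  have ha1 : (1:ℚ) < (q:ℚ) := by exact_mod_cast hq2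
  have hap : ∀ e : ℕ, 0 < e → (1:ℚ) < (q:ℚ)^e := fun e he => one_lt_pow₀ ha1 (by omega)
  have h1 : ((q:ℚ)^m₁ - 1) ≠ 0 := by have := hap m₁ hm₁; linarith
  have h2 : ((q:ℚ)^m₂ - 1) ≠ 0 := by have := hap m₂ (by omega); linarith
  have h0 : ((q:ℚ) - 1) ≠ 0 := by linarith
  have haq : (q:ℚ) ≠ 0 := by linarith
  have castsub : ∀ e : ℕ, ((q^e - 1 : ℕ) : ℚ) = (q:ℚ)^e - 1 := by
    intro e
    have : 1 ≤ q^e := Nat.one_le_pow _ _ (by omega)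
    push_cast [this]
    ring
  have hNQ : ((q:ℚ) - 1) * ((q:ℚ)^m - 1) = ((q:ℚ)^m₁ - 1) * ((q:ℚ)^m₂ - 1) * (N:ℚ) := by
    have := congrArg (Nat.cast : ℕ → ℚ) hN
    rw [Nat.cast_mul, Nat.cast_mul, Nat.cast_mul, castsub, castsub, castsub,
      Nat.cast_sub (by omega)] at this
    push_cast at this
    linarith [this]
  have hterm : ∀ i ∈ Finset.range m₁,
      (⌈d / (q:ℚ)^i⌉ : ℚ) = (N:ℚ) * ((q:ℚ)^(m₂-1) - 1) * (q:ℚ)^(m₁-1-i) := by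
    intro i hi
    rw [Finset.mem_range] at hi
    have hval : d / (q:ℚ)^i = ((N * (q^(m₂-1) - 1) * q^(m₁-1-i) : ℕ) : ℚ) := by
      rw [Nat.cast_mul, Nat.cast_mul, castsub, hd]
      push_cast
      rw [div_div, div_eq_iff (by positivity)]
      have hpe : (q:ℚ)^(m₁-1-i) * (q:ℚ)^i = (q:ℚ)^(m₁-1) := by
        rw [← pow_add]; congr 1; omega
      linear_combination ((q:ℚ)^(m₁-1) * ((q:ℚ)^(m₂-1) - 1)) * hNQ
        - (N:ℚ) * ((q:ℚ)^(m₂-1) - 1) * ((q:ℚ)^m₁ - 1) * ((q:ℚ)^m₂ - 1) * hpe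
    rw [hval, Int.ceil_natCast]
    push_cast [castsub]
    ring
  rw [Finset.sum_congr rfl hterm, hn]
  have hsum : ∑ i ∈ Finset.range m₁, (N:ℚ) * ((q:ℚ)^(m₂-1) - 1) * (q:ℚ)^(m₁-1-i)
      = (N:ℚ) * ((q:ℚ)^(m₂-1) - 1) * ∑ j ∈ Finset.range m₁, (q:ℚ)^j := by
    rw [← Finset.mul_sum]
    congr 1
    exact Finset.sum_range_reflect (fun j => (q:ℚ)^j) m₁
  have hG : (∑ j ∈ Finset.range m₁, (q:ℚ)^j) = ((q:ℚ)^m₁ - 1) / ((q:ℚ) - 1) := by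
    rw [eq_div_iff h0]
    exact geom_sum_mul _ _
  have hp2 : (q:ℚ)^m₂ = (q:ℚ) * (q:ℚ)^(m₂-1) := by
    rw [← pow_succ']; congr 1; omega
  rw [hsum, hG]
  rw [hp2] at hNQ h2 ⊢
  field_simp
  rw [eq_div_iff (by rwa [mul_comm] at h2)]
  linear_combination ((1 - (q:ℚ)^(m₂-1))) * hNQ
end
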